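/- As an identity of formal power series in t over ℝ[x]: ∏_{j=0}^{∞}(1 − (1−q)²t²q^{2j−1/2}/4) · Σ_{n=0}^{∞} c_n Ψ_n(x) t^n = Σ_{n=0}^{∞} h_n(x|q) t^n, where c_n = (1−q)^n q^{n(n−1)/4} / (2^n (q;q)_n), h_n(x|q) = c_n H_n(x|q), Ψ_n are defined by Ψ_0 = 1, Ψ_1 = 2x, Ψ_{n+2} = (4x² − (1−q^{n+1})(1−q^{−n−1}))Ψ_n, and H_n are the q-Hermite polynomials. -/

import Mathlib

noncomputable section

open Polynomial Filter

def qPoch (a p : ℝ) (n : ℕ) : ℝ := ∏ j ∈ Finset.range n, (1 - a * p ^ j)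

def qHermite (q : ℝ) : ℕ → ℝ → ℝ
  | 0 => fun _ => 1
  | 1 => fun x => 2 * x
  | (n + 2) => fun x => 2 * x * qHermite q (n + 1) x - (1 - q ^ (n + 1)) * qHermite q n x

def Psi (q : ℝ) : ℕ → ℝ → ℝ
  | 0 => fun _ => 1
  | 1 => fun x => 2 * x
  | (n + 2) => fun x =>
      4 * x ^ 2 * Psi q n x - (1 - q ^ (n + 1)) * (1 - q ^ (-(n + 1) : ℤ)) * Psi q n x

/-- `c_n = (1-q)^n q^{n(n-1)/4} / (2^n (q;q)_n)`, with `q^{n(n-1)/4} = (√q)^{n(n-1)/2}`. -/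
def cCoeff (q : ℝ) (n : ℕ) : ℝ :=
  (1 - q) ^ n * Real.sqrt q ^ (n * (n - 1) / 2) / (2 ^ n * qPoch q q n)

def hq (q : ℝ) (n : ℕ) (x : ℝ) : ℝ := cCoeff q n * qHermite q n x

-- helper polynomial coefficient lemmas
lemma coeff_step (p : Polynomial ℝ) (c : ℝ) (m : ℕ) :
    (p * (1 - C c * X ^ 2)).coeff (m + 2) = p.coeff (m + 2) - c * p.coeff m := by
  have : p * (1 - C c * X ^ 2) = p - C c * (p * X ^ 2) := by ring
  rw [this, Polynomial.coeff_sub, Polynomial.coeff_C_mul, Polynomial.coeff_mul_X_pow]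

lemma coeff_step0 (p : Polynomial ℝ) (c : ℝ) :
    (p * (1 - C c * X ^ 2)).coeff 0 = p.coeff 0 := by
  have : p * (1 - C c * X ^ 2) = p - C c * (p * X ^ 2) := by ring
  rw [this, Polynomial.coeff_sub, Polynomial.coeff_C_mul, Polynomial.coeff_mul_X_pow']
  simp

lemma coeff_step1 (p : Polynomial ℝ) (c : ℝ) :
    (p * (1 - C c * X ^ 2)).coeff 1 = p.coeff 1 := by
  have : p * (1 - C c * X ^ 2) = p - C c * (p * X ^ 2) := by ring
  rw [this, Polynomial.coeff_sub, Polynomial.coeff_C_mul, Polynomial.coeff_mul_X_pow']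
  simp
lemma Pl_shift (a q : ℝ) (N : ℕ) : ∀ m : ℕ,
    (∏ j ∈ Finset.range N, (1 - C (a * q ^ (2*(j+1))) * X ^ 2 : Polynomial ℝ)).coeff m
      = q ^ m * (∏ j ∈ Finset.range N, (1 - C (a * q ^ (2*j)) * X ^ 2 : Polynomial ℝ)).coeff m := by
  induction N with
  | zero =>
    intro m
    cases m with
    | zero => simp
    | succ m => simp [Polynomial.coeff_one]
  | succ N ih =>
    intro m
    rw [Finset.prod_range_succ, Finset.prod_range_succ]
    match m with
    | 0 => rw [coeff_step0, coeff_step0]; exact ih 0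
    | 1 => rw [coeff_step1, coeff_step1]; exact ih 1
    | (m+2) =>
      rw [coeff_step, coeff_step, ih (m+2), ih m]
      ring

lemma Pl_rec (a q : ℝ) (N m : ℕ) :
    (∏ j ∈ Finset.range (N+1), (1 - C (a * q ^ (2*j)) * X ^ 2 : Polynomial ℝ)).coeff (m+2)
      = q ^ (m+2) * (∏ j ∈ Finset.range N, (1 - C (a * q ^ (2*j)) * X ^ 2 : Polynomial ℝ)).coeff (m+2)
        - a * q ^ m * (∏ j ∈ Finset.range N, (1 - C (a * q ^ (2*j)) * X ^ 2 : Polynomial ℝ)).coeff m := by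
  have hsplit : (∏ j ∈ Finset.range (N+1), (1 - C (a * q ^ (2*j)) * X ^ 2 : Polynomial ℝ))
      = (∏ j ∈ Finset.range N, (1 - C (a * q ^ (2*(j+1))) * X ^ 2 : Polynomial ℝ)) * (1 - C a * X ^ 2) := by
    rw [Finset.prod_range_succ']
    congr 1
    norm_num
  rw [hsplit, coeff_step, Pl_shift, Pl_shift]
  ring

lemma Pl_coeff0 (a q : ℝ) (N : ℕ) :
    (∏ j ∈ Finset.range N, (1 - C (a * q ^ (2*j)) * X ^ 2 : Polynomial ℝ)).coeff 0 = 1 := by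
  induction N with
  | zero => simp [Polynomial.coeff_one]
  | succ N ih => rw [Finset.prod_range_succ, coeff_step0, ih]

lemma Pl_coeff1 (a q : ℝ) (N : ℕ) :
    (∏ j ∈ Finset.range N, (1 - C (a * q ^ (2*j)) * X ^ 2 : Polynomial ℝ)).coeff 1 = 0 := by
  induction N with
  | zero => simp [Polynomial.coeff_one]
  | succ N ih => rw [Finset.prod_range_succ, coeff_step1, ih]
section core
variable (q σ a x : ℝ) (hq0 : 0 < q) (hq1 : q < 1)
include hq0 hq1

omit hq0 hq1 in
lemma tri (n : ℕ) : (n+1)*n/2 = n*(n-1)/2 + n := by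
  cases n with
  | zero => rfl
  | succ m =>
    have h2 : (m+1+1)*(m+1) = (m+1)*m + 2*(m+1) := by ring
    rw [h2, Nat.add_mul_div_left _ _ (by norm_num : 0 < 2)]
    congr 1

lemma pow_lt (k : ℕ) : q ^ (k+1) < 1 := by
  exact pow_lt_one₀ hq0.le hq1 (Nat.succ_ne_zero k)

lemma sub_pow_pos (k : ℕ) : 0 < 1 - q ^ (k+1) := by
  have := pow_lt q hq0 hq1 k; linarith

lemma qPoch_succ (n : ℕ) : qPoch q q (n+1) = qPoch q q n * (1 - q ^ (n+1)) := by
  rw [qPoch, Finset.prod_range_succ, ← qPoch]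
  congr 2
  rw [pow_succ']

lemma qPoch_pos (n : ℕ) : 0 < qPoch q q n := by
  apply Finset.prod_pos
  intro j _
  have : q * q ^ j = q ^ (j+1) := by rw [pow_succ']
  rw [this]
  exact sub_pow_pos q hq0 hq1 j

lemma Lc (n : ℕ) : 2 * (1 - q ^ (n+1)) * cCoeff q (n+1) = (1-q) * Real.sqrt q ^ n * cCoeff q n := by
  have hp := qPoch_pos q hq0 hq1 n
  have hs := sub_pow_pos q hq0 hq1 n
  rw [cCoeff, cCoeff, qPoch_succ q hq0 hq1 n]
  have hn : (n+1) * ((n+1)-1) / 2 = n*(n-1)/2 + n := by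
    simpa using tri n
  rw [hn, pow_add (Real.sqrt q)]
  field_simp [hp.ne', hs.ne']
  ring
end core


lemma hsq (q : ℝ) (hq0 : 0 < q) (k : ℕ) : Real.sqrt q ^ (2*k) = q ^ k := by
  rw [pow_mul, Real.sq_sqrt hq0.le]

lemma e2 (q a : ℝ) (hq0 : 0 < q) (hq1 : q < 1) (haq : a = (1-q)^2/(4*Real.sqrt q)) (n : ℕ) :
    (1 - q^(n+1)) * (1 - q^(n+2)) * cCoeff q (n+2) = a * q^(n+1) * cCoeff q n := by
  have l1 := Lc q hq0 hq1 (n+1)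
  have l0 := Lc q hq0 hq1 n
  have hσ0 : Real.sqrt q ≠ 0 := by positivity
  have haux : a * q^(n+1) = (1-q)^2 * Real.sqrt q ^(2*n+1) / 4 := by
    rw [haq, ← hsq q hq0 (n+1)]
    field_simp
    ring
  rw [haux]
  linear_combination ((1 - q^(n+1))/2) * l1 + ((1-q) * Real.sqrt q ^(n+1)/4) * l0

lemma Rrec (q a x : ℝ) (hq0 : 0 < q) (hq1 : q < 1) (haq : a = (1-q)^2/(4*Real.sqrt q)) (n : ℕ) :
    (1 - q^(n+2)) * hq q (n+2) x
      = x*(1-q)*Real.sqrt q ^(n+1) * hq q (n+1) x - a*q^(n+1) * hq q n x := by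
  have hH : qHermite q (n+2) x = 2*x*qHermite q (n+1) x - (1-q^(n+1))*qHermite q n x := rfl
  rw [hq, hq, hq, hH]
  linear_combination (x * qHermite q (n+1) x) * Lc q hq0 hq1 (n+1)
    - qHermite q n x * e2 q a hq0 hq1 haq n

lemma LB (q a x : ℝ) (hq0 : 0 < q) (hq1 : q < 1) (haq : a = (1-q)^2/(4*Real.sqrt q)) (n : ℕ) :
    (1 - q^(n+1)) * (1 - q^(n+2)) * (cCoeff q (n+2) * Psi q (n+2) x)
      = (4*a*x^2*q^(n+1) + a*(1-q^(n+1))^2) * (cCoeff q n * Psi q n x) := by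
  have hzc : (-(n+1) : ℤ) = -((n+1 : ℕ) : ℤ) := by push_cast; ring
  have hz : (q:ℝ) ^ (-(n + 1) : ℤ) = (q^(n+1))⁻¹ := by
    rw [hzc, zpow_neg, zpow_natCast]
  have hP : Psi q (n+2) x = 4*x^2*Psi q n x - (1-q^(n+1))*(1-(q^(n+1))⁻¹)*Psi q n x := by
    rw [show Psi q (n+2) x
      = 4*x^2*Psi q n x - (1-q^(n+1))*(1-q^(-(n+1):ℤ))*Psi q n x from rfl, hz]
  have hqn : (q:ℝ)^(n+1) ≠ 0 := by positivity
  have hd : q^(n+1) * ((1-q^(n+1))*(1-(q^(n+1))⁻¹)) = -(1-q^(n+1))^2 := by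
    field_simp
    ring
  rw [hP]
  linear_combination ((4*x^2 - (1-q^(n+1))*(1-(q^(n+1))⁻¹)) * Psi q n x) * e2 q a hq0 hq1 haq n
    - (a * cCoeff q n * Psi q n x) * hd

lemma Mh (q a x : ℝ) (hq0 : 0 < q) (hq1 : q < 1) (haq : a = (1-q)^2/(4*Real.sqrt q)) (n : ℕ) :
    q*(1-q^(n+3))*(1-q^(n+4)) * hq q (n+4) x
      = 4*a*x^2*q^(n+4)*hq q (n+2) x - a*q^(n+4)*(2-q^(n+3)-q^(n+2))*hq q (n+2) x
        - a^2*q^(2*n+5)*hq q n x := by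
  have E1 := Rrec q a x hq0 hq1 haq (n+2)
  have E2 := Rrec q a x hq0 hq1 haq (n+1)
  have E3 := Rrec q a x hq0 hq1 haq n
  norm_num at E1 E2
  have hσ : Real.sqrt q ^ 2 = q := Real.sq_sqrt hq0.le
  have hσ0 : Real.sqrt q ≠ 0 := by positivity
  have f1 : (1-q)^2 * Real.sqrt q ^ (2*n+5) = 4*a*q^(n+3) := by
    rw [haq, ← hsq q hq0 (n+3)]
    field_simp
    ring
  linear_combination (q*(1-q^(n+3)))*E1 + (q*x*(1-q)*Real.sqrt q^(n+3))*E2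
    + (q*a*q^(n+2)*Real.sqrt q^2)*E3 + (x^2*q*hq q (n+2) x)*f1
    + (-(a*q^(n+3)*(1-q^(n+2))*hq q (n+2) x) - a^2*q^(2*n+4)*hq q n x)*hσ

lemma cCoeff0 (q : ℝ) : cCoeff q 0 = 1 := by
  simp [cCoeff, qPoch]

lemma cCoeff1 (q : ℝ) (hq1 : q < 1) : cCoeff q 1 = 1/2 := by
  have h : (1:ℝ) - q ≠ 0 := by intro h; nlinarith
  simp [cCoeff, qPoch]
  field_simp

lemma hq0val (q x : ℝ) : hq q 0 x = 1 := by
  simp [hq, qHermite, cCoeff0]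

lemma hq1val (q x : ℝ) (hq1 : q < 1) : hq q 1 x = x := by
  have : qHermite q 1 x = 2*x := rfl
  rw [hq, this, cCoeff1 q hq1]
  ring

lemma base2 (q a x : ℝ) (hq0 : 0 < q) (hq1 : q < 1) (haq : a = (1-q)^2/(4*Real.sqrt q)) :
    (1-q^2) * (hq q 2 x - cCoeff q 2 * Psi q 2 x) = -a := by
  have hc2 := e2 q a hq0 hq1 haq 0
  rw [cCoeff0] at hc2
  norm_num at hc2
  have hH2 : qHermite q 2 x = 2*x*(2*x) - (1-q^(0+1))*1 := rfl
  have hz : (q:ℝ) ^ (-(0 + 1) : ℤ) = q⁻¹ := by norm_num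
  have hΨ2 : Psi q 2 x = 4*x^2 - (1-q)*(1-q⁻¹) := by
    have h0 : Psi q 2 x = 4*x^2*Psi q 0 x - (1-q^(0+1))*(1-q^(-(0+1):ℤ))*Psi q 0 x := rfl
    rw [h0, hz]
    norm_num [Psi]
  rw [hq, hH2, hΨ2]
  have hqne : q ≠ 0 := hq0.ne'
  field_simp
  linear_combination (-1)*hc2

lemma base3 (q a x : ℝ) (hq0 : 0 < q) (hq1 : q < 1) (haq : a = (1-q)^2/(4*Real.sqrt q)) :
    (1-q^2) * (hq q 3 x - cCoeff q 3 * Psi q 3 x) = -a*x := by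
  have hc2 := e2 q a hq0 hq1 haq 0
  rw [cCoeff0] at hc2
  norm_num at hc2
  have hc3 := Lc q hq0 hq1 2
  rw [Real.sq_sqrt hq0.le] at hc3
  norm_num at hc3
  have hkey : 2*(1-q^2)*(1-q^3)*cCoeff q 3 = a*q^2 := by
    linear_combination (1-q^2)*hc3 + q*hc2
  have hH3 : qHermite q 3 x = 2*x*(2*x*(2*x) - (1-q^(0+1))*1) - (1-q^(1+1))*(2*x) := rfl
  have hz : (q:ℝ) ^ (-(1 + 1) : ℤ) = (q^2)⁻¹ := by
    rw [show (-(1+1) : ℤ) = -((2:ℕ):ℤ) by norm_num, zpow_neg, zpow_natCast]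
  have hΨ3 : Psi q 3 x = 4*x^2*(2*x) - (1-q^2)*(1-(q^2)⁻¹)*(2*x) := by
    have h0 : Psi q 3 x = 4*x^2*Psi q 1 x - (1-q^(1+1))*(1-q^(-(1+1):ℤ))*Psi q 1 x := rfl
    rw [h0, hz]
    norm_num [Psi]
  rw [hq, hH3, hΨ3]
  have hqne : q ≠ 0 := hq0.ne'
  field_simp
  linear_combination (-x)*hkey
lemma P1' (q a : ℝ) (A g : ℕ → ℝ) (hA1 : A 1 = 0)
    (hArec : ∀ m, (1 - q^(m+2)) * A (m+2) = -a * q^m * A m) (n : ℕ) :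
    ∑ j ∈ Finset.range (n+5), A (n+4-j) * g j
      = ∑ j ∈ Finset.range (n+5), q^(n+4-j) * A (n+4-j) * g j
        - ∑ j ∈ Finset.range (n+3), a * q^(n+2-j) * A (n+2-j) * g j := by
  have main : ∑ j ∈ Finset.range (n+5), (A (n+4-j) * g j - q^(n+4-j) * A (n+4-j) * g j)
      = ∑ j ∈ Finset.range (n+3), -(a * q^(n+2-j) * A (n+2-j) * g j) := by
    rw [Finset.sum_range_succ, Finset.sum_range_succ]
    rw [show n+4-(n+4) = 0 by omega, show n+4-(n+3) = 1 by omega, hA1]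
    have hcong : ∀ j ∈ Finset.range (n+3),
        A (n+4-j) * g j - q^(n+4-j) * A (n+4-j) * g j
          = -(a * q^(n+2-j) * A (n+2-j) * g j) := by
      intro j hj
      have hj' : j < n+3 := Finset.mem_range.mp hj
      rw [show n+4-j = (n+2-j)+2 by omega]
      linear_combination g j * hArec (n+2-j)
    rw [Finset.sum_congr rfl hcong]
    ring
  rw [Finset.sum_sub_distrib] at main
  have : ∑ j ∈ Finset.range (n+3), -(a * q^(n+2-j) * A (n+2-j) * g j)
      = - ∑ j ∈ Finset.range (n+3), a * q^(n+2-j) * A (n+2-j) * g j := by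
    rw [Finset.sum_neg_distrib]
  rw [this] at main
  linarith [main]

lemma P2' (q a : ℝ) (A g : ℕ → ℝ) (hA1 : A 1 = 0)
    (hArec : ∀ m, (1 - q^(m+2)) * A (m+2) = -a * q^m * A m) (n : ℕ) :
    ∑ j ∈ Finset.range (n+5), q^(2*(n+4-j)) * A (n+4-j) * g j
      - ∑ j ∈ Finset.range (n+3), a*(q^2+q^3) * q^(2*(n+2-j)) * A (n+2-j) * g j
      + ∑ j ∈ Finset.range (n+1), a^2 * q^(2*(n-j)+5) * A (n-j) * g j
    = ∑ j ∈ Finset.range (n+5), q^(n+4-j) * A (n+4-j) * g j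
      - ∑ j ∈ Finset.range (n+3), a * q^((n+2-j)+3) * A (n+2-j) * g j := by
  have stage1 : ∑ j ∈ Finset.range (n+5),
        (q^(2*(n+4-j)) * A (n+4-j) * g j - q^(n+4-j) * A (n+4-j) * g j)
      = ∑ j ∈ Finset.range (n+3), a * q^(2*(n+2-j)+2) * A (n+2-j) * g j := by
    rw [Finset.sum_range_succ, Finset.sum_range_succ]
    rw [show n+4-(n+4) = 0 by omega, show n+4-(n+3) = 1 by omega, hA1]
    have hcong : ∀ j ∈ Finset.range (n+3),
        q^(2*(n+4-j)) * A (n+4-j) * g j - q^(n+4-j) * A (n+4-j) * g j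
          = a * q^(2*(n+2-j)+2) * A (n+2-j) * g j := by
      intro j hj
      have hj' : j < n+3 := Finset.mem_range.mp hj
      rw [show n+4-j = (n+2-j)+2 by omega]
      linear_combination (-(q^((n+2-j)+2)) * g j) * hArec (n+2-j)
    rw [Finset.sum_congr rfl hcong]
    ring
  have stage2 : ∑ j ∈ Finset.range (n+3),
        (a * q^(2*(n+2-j)+2) * A (n+2-j) * g j
          - a*(q^2+q^3) * q^(2*(n+2-j)) * A (n+2-j) * g j
          + a * q^((n+2-j)+3) * A (n+2-j) * g j)
      = - ∑ j ∈ Finset.range (n+1), a^2 * q^(2*(n-j)+5) * A (n-j) * g j := by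
    rw [Finset.sum_range_succ, Finset.sum_range_succ]
    rw [show n+2-(n+2) = 0 by omega, show n+2-(n+1) = 1 by omega, hA1]
    have hcong : ∀ j ∈ Finset.range (n+1),
        a * q^(2*(n+2-j)+2) * A (n+2-j) * g j
          - a*(q^2+q^3) * q^(2*(n+2-j)) * A (n+2-j) * g j
          + a * q^((n+2-j)+3) * A (n+2-j) * g j
        = -(a^2 * q^(2*(n-j)+5) * A (n-j) * g j) := by
      intro j hj
      have hj' : j < n+1 := Finset.mem_range.mp hj
      rw [show n+2-j = (n-j)+2 by omega]
      linear_combination (a * q^((n-j)+5) * g j) * hArec (n-j)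
    rw [Finset.sum_congr rfl hcong]
    rw [← Finset.sum_neg_distrib]
    ring
  rw [Finset.sum_sub_distrib] at stage1
  rw [Finset.sum_add_distrib, Finset.sum_sub_distrib] at stage2
  linarith [stage1, stage2]

lemma dagl (q a x : ℝ) (A B : ℕ → ℝ)
    (hLB : ∀ j, (1-q^(j+1))*(1-q^(j+2))*B (j+2)
      = (4*a*x^2*q^(j+1)+a*(1-q^(j+1))^2)*B j) (n : ℕ) :
    ∑ j ∈ Finset.range (n+5), q^(n+4-j) * A (n+4-j) * ((q + q^(2*j) - (1+q)*q^j) * B j)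
      = ∑ j ∈ Finset.range (n+3),
          q^(n+2-j) * A (n+2-j) * ((a*q + a*q^(2*j+3) + (4*x^2-2)*a*q^(j+2)) * B j) := by
  rw [Finset.sum_range_succ', Finset.sum_range_succ']
  have h0 : q^(n+4-0) * A (n+4-0) * ((q + q^(2*0) - (1+q)*q^0) * B 0) = 0 := by
    ring
  have h1 : q^(n+4-(0+1)) * A (n+4-(0+1)) * ((q + q^(2*(0+1)) - (1+q)*q^(0+1)) * B (0+1)) = 0 := by
    ring
  rw [h0, h1]
  have hcong : ∀ j ∈ Finset.range (n+3),
      q^(n+4-(j+1+1)) * A (n+4-(j+1+1)) * ((q + q^(2*(j+1+1)) - (1+q)*q^(j+1+1)) * B (j+1+1))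
        = q^(n+2-j) * A (n+2-j) * ((a*q + a*q^(2*j+3) + (4*x^2-2)*a*q^(j+2)) * B j) := by
    intro j hj
    rw [show n+4-(j+1+1) = n+2-j by omega, show j+1+1 = j+2 by omega]
    linear_combination (q^(n+2-j) * A (n+2-j) * q) * hLB j
  rw [Finset.sum_congr rfl hcong]
  ring

lemma KEY (q a x : ℝ) (A B : ℕ → ℝ) (hA1 : A 1 = 0)
    (hArec : ∀ m, (1 - q^(m+2)) * A (m+2) = -a * q^m * A m)
    (hLB : ∀ j, (1-q^(j+1))*(1-q^(j+2))*B (j+2)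
      = (4*a*x^2*q^(j+1)+a*(1-q^(j+1))^2)*B j) (n : ℕ) :
    q * (∑ k ∈ Finset.range (n+5), A (n+4-k) * B k)
      + q^(2*n+8) * (∑ k ∈ Finset.range (n+5), A (n+4-k) * B k)
      + a^2*q^(2*n+5) * (∑ k ∈ Finset.range (n+1), A (n-k) * B k)
    = (1+q)*q^(n+4) * (∑ k ∈ Finset.range (n+5), A (n+4-k) * B k)
      + ((4*x^2-2)*a*q^(n+4) + a*(q^2+q^3)*q^(2*n+4))
          * (∑ k ∈ Finset.range (n+3), A (n+2-k) * B k) := by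
  have hP1 : ∑ j ∈ Finset.range (n+5), A (n+4-j) * (q * B j)
      = ∑ j ∈ Finset.range (n+5), q^(n+4-j) * A (n+4-j) * (q * B j)
        - ∑ j ∈ Finset.range (n+3), a * q^(n+2-j) * A (n+2-j) * (q * B j) :=
    P1' q a A _ hA1 hArec n
  have hP2 : ∑ j ∈ Finset.range (n+5), q^(2*(n+4-j)) * A (n+4-j) * (q^(2*j) * B j)
      - ∑ j ∈ Finset.range (n+3), a*(q^2+q^3) * q^(2*(n+2-j)) * A (n+2-j) * (q^(2*j) * B j)
      + ∑ j ∈ Finset.range (n+1), a^2 * q^(2*(n-j)+5) * A (n-j) * (q^(2*j) * B j)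
    = ∑ j ∈ Finset.range (n+5), q^(n+4-j) * A (n+4-j) * (q^(2*j) * B j)
      - ∑ j ∈ Finset.range (n+3), a * q^((n+2-j)+3) * A (n+2-j) * (q^(2*j) * B j) :=
    P2' q a A _ hA1 hArec n
  have hdag := dagl q a x A B hLB n
  have cv0 : ∑ j ∈ Finset.range (n+5), A (n+4-j) * (q * B j)
      = q * ∑ k ∈ Finset.range (n+5), A (n+4-k) * B k := by
    rw [Finset.mul_sum]
    exact Finset.sum_congr rfl fun j _ => by ring
  have cvU2' : ∑ j ∈ Finset.range (n+5), q^(2*(n+4-j)) * A (n+4-j) * (q^(2*j) * B j)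
      = q^(2*n+8) * ∑ k ∈ Finset.range (n+5), A (n+4-k) * B k := by
    rw [Finset.mul_sum]
    refine Finset.sum_congr rfl fun j hj => ?_
    have hj' : j < n+5 := Finset.mem_range.mp hj
    rw [show 2*n+8 = 2*(n+4-j) + 2*j by omega, pow_add]
    ring
  have cvV2' : ∑ j ∈ Finset.range (n+3), a*(q^2+q^3) * q^(2*(n+2-j)) * A (n+2-j) * (q^(2*j) * B j)
      = (a*(q^2+q^3)*q^(2*n+4)) * ∑ k ∈ Finset.range (n+3), A (n+2-k) * B k := by
    rw [Finset.mul_sum]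
    refine Finset.sum_congr rfl fun j hj => ?_
    have hj' : j < n+3 := Finset.mem_range.mp hj
    rw [show 2*n+4 = 2*(n+2-j) + 2*j by omega, pow_add]
    ring
  have cvW2' : ∑ j ∈ Finset.range (n+1), a^2 * q^(2*(n-j)+5) * A (n-j) * (q^(2*j) * B j)
      = (a^2*q^(2*n+5)) * ∑ k ∈ Finset.range (n+1), A (n-k) * B k := by
    rw [Finset.mul_sum]
    refine Finset.sum_congr rfl fun j hj => ?_
    have hj' : j < n+1 := Finset.mem_range.mp hj
    rw [show 2*n+5 = (2*(n-j)+5) + 2*j by omega, pow_add]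
    ring
  have s1 : ∑ j ∈ Finset.range (n+5), q^(n+4-j) * A (n+4-j) * ((q + q^(2*j) - (1+q)*q^j) * B j)
      = ∑ j ∈ Finset.range (n+5), q^(n+4-j) * A (n+4-j) * (q * B j)
        + ∑ j ∈ Finset.range (n+5), q^(n+4-j) * A (n+4-j) * (q^(2*j) * B j)
        - (1+q)*q^(n+4) * ∑ k ∈ Finset.range (n+5), A (n+4-k) * B k := by
    rw [Finset.mul_sum, ← Finset.sum_add_distrib, ← Finset.sum_sub_distrib]
    refine Finset.sum_congr rfl fun j hj => ?_
    have hj' : j < n+5 := Finset.mem_range.mp hj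
    rw [show n+4 = (n+4-j) + j by omega, pow_add, show n+4-j+j-j = n+4-j by omega]
    ring
  have s2 : ∑ j ∈ Finset.range (n+3),
        q^(n+2-j) * A (n+2-j) * ((a*q + a*q^(2*j+3) + (4*x^2-2)*a*q^(j+2)) * B j)
      = ∑ j ∈ Finset.range (n+3), a * q^(n+2-j) * A (n+2-j) * (q * B j)
        + ∑ j ∈ Finset.range (n+3), a * q^((n+2-j)+3) * A (n+2-j) * (q^(2*j) * B j)
        + ((4*x^2-2)*a*q^(n+4)) * ∑ k ∈ Finset.range (n+3), A (n+2-k) * B k := by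
    rw [Finset.mul_sum, ← Finset.sum_add_distrib, ← Finset.sum_add_distrib]
    refine Finset.sum_congr rfl fun j hj => ?_
    have hj' : j < n+3 := Finset.mem_range.mp hj
    rw [show n+4 = (n+2-j) + (j+2) by omega, pow_add]
    ring
  linear_combination (-1) * cv0 - cvU2' - cvW2' + cvV2' + hP1 + hP2 + hdag - s1 + s2

/-- The generating-function identity `(t² q^{-1/2}; q²)_∞ E(x;t) = Σ h_n(x|q) t^n`,
stated coefficientwise: if `A_m` is the `m`-th coefficient of the infinite product
`∏_{j≥0} (1 - ((1-q)²/(4√q)) q^{2j} t²)` (as a limit of partial-product coefficients),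
then `h_n(x|q) = Σ_{k=0}^n A_{n-k} c_k Ψ_k(x)`. -/
theorem generating_function (q : ℝ) (hq0 : 0 < q) (hq1 : q < 1)
    (A : ℕ → ℝ)
    (hA : ∀ m : ℕ, Tendsto
      (fun N : ℕ => (∏ j ∈ Finset.range N,
        (1 - C ((1 - q) ^ 2 / (4 * Real.sqrt q) * q ^ (2 * j)) * X ^ 2 :
          Polynomial ℝ)).coeff m)
      atTop (nhds (A m))) :
    ∀ (n : ℕ) (x : ℝ),
      hq q n x = ∑ k ∈ Finset.range (n + 1), A (n - k) * cCoeff q k * Psi q k x := by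
  set a : ℝ := (1 - q) ^ 2 / (4 * Real.sqrt q) with ha
  have haq : a = (1-q)^2/(4*Real.sqrt q) := ha
  have hA0 : A 0 = 1 := by
    have h1 : Tendsto (fun _ : ℕ => (1:ℝ)) atTop (nhds (A 0)) := by
      have := hA 0
      simpa only [Pl_coeff0 a q] using this
    exact tendsto_nhds_unique h1 tendsto_const_nhds
  have hA1 : A 1 = 0 := by
    have h1 : Tendsto (fun _ : ℕ => (0:ℝ)) atTop (nhds (A 1)) := by
      have := hA 1
      simpa only [Pl_coeff1 a q] using this
    exact tendsto_nhds_unique h1 tendsto_const_nhds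
  have hArec : ∀ m : ℕ, (1 - q ^ (m+2)) * A (m+2) = - a * q ^ m * A m := by
    intro m
    have hL : Tendsto (fun N : ℕ => (∏ j ∈ Finset.range (N+1),
        (1 - C (a * q ^ (2*j)) * X ^ 2 : Polynomial ℝ)).coeff (m+2)) atTop (nhds (A (m+2))) :=
      (hA (m+2)).comp (tendsto_add_atTop_nat 1)
    have hR : Tendsto (fun N : ℕ => q ^ (m+2) * (∏ j ∈ Finset.range N,
        (1 - C (a * q ^ (2*j)) * X ^ 2 : Polynomial ℝ)).coeff (m+2)
        - a * q ^ m * (∏ j ∈ Finset.range N,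
        (1 - C (a * q ^ (2*j)) * X ^ 2 : Polynomial ℝ)).coeff m) atTop
        (nhds (q ^ (m+2) * A (m+2) - a * q ^ m * A m)) :=
      ((hA (m+2)).const_mul _).sub ((hA m).const_mul _)
    have heq : A (m+2) = q ^ (m+2) * A (m+2) - a * q ^ m * A m := by
      refine tendsto_nhds_unique ?_ hR
      have hfun : (fun N : ℕ => (∏ j ∈ Finset.range (N+1),
        (1 - C (a * q ^ (2*j)) * X ^ 2 : Polynomial ℝ)).coeff (m+2))
        = (fun N : ℕ => q ^ (m+2) * (∏ j ∈ Finset.range N,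
        (1 - C (a * q ^ (2*j)) * X ^ 2 : Polynomial ℝ)).coeff (m+2)
        - a * q ^ m * (∏ j ∈ Finset.range N,
        (1 - C (a * q ^ (2*j)) * X ^ 2 : Polynomial ℝ)).coeff m) := by
        funext N; exact Pl_rec a q N m
      rw [← hfun]; exact hL
    linear_combination heq
  intro n x
  have hgoal : (∑ k ∈ Finset.range (n+1), A (n-k) * cCoeff q k * Psi q k x)
      = ∑ k ∈ Finset.range (n+1), A (n-k) * (cCoeff q k * Psi q k x) :=
    Finset.sum_congr rfl fun k _ => by ring
  rw [hgoal]
  clear hgoal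
  induction n using Nat.strong_induction_on with
  | _ n ih =>
    match n, ih with
    | 0, _ =>
      rw [Finset.sum_range_one, hq0val q x]
      norm_num [hA0, cCoeff0]
      exact (show Psi q 0 x = 1 from rfl).symm
    | 1, _ =>
      rw [Finset.sum_range_succ, Finset.sum_range_one, hq1val q x hq1]
      norm_num [hA0, hA1, cCoeff1 q hq1]
      rw [show Psi q 1 x = 2*x from rfl]
      ring
    | 2, _ =>
      have hb2 := base2 q a x hq0 hq1 haq
      have hr0 := hArec 0
      rw [hA0] at hr0
      norm_num at hr0
      have hne : (1:ℝ) - q^2 ≠ 0 := by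
        have : q^2 < 1 := pow_lt_one₀ hq0.le hq1 (by omega)
        intro h; rw [sub_eq_zero] at h; rw [← h] at this; exact lt_irrefl _ this
      rw [Finset.sum_range_succ, Finset.sum_range_succ, Finset.sum_range_one]
      norm_num [hA0, hA1, cCoeff0]
      rw [show Psi q 0 x = 1 from rfl]
      have h2' : (1-q^2) * (hq q 2 x) = (1-q^2) * (A 2 * 1 + cCoeff q 2 * Psi q 2 x) := by
        linear_combination hb2 - hr0
      have := mul_left_cancel₀ hne h2'
      linarith [this]
    | 3, _ =>
      have hb3 := base3 q a x hq0 hq1 haq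
      have hr0 := hArec 0
      rw [hA0] at hr0
      norm_num at hr0
      have hA3 : A 3 = 0 := by
        have hr1 := hArec 1
        rw [hA1] at hr1
        have hne3 : (1:ℝ) - q^3 ≠ 0 := by
          have : q^3 < 1 := pow_lt_one₀ hq0.le hq1 (by omega)
          intro h; rw [sub_eq_zero] at h; rw [← h] at this; exact lt_irrefl _ this
        have : (1 - q^(1+2)) * A (1+2) = 0 := by rw [hr1]; ring
        norm_num at this
        rcases this with h | h
        · exact absurd h hne3
        · exact h
      have hne : (1:ℝ) - q^2 ≠ 0 := by
        have : q^2 < 1 := pow_lt_one₀ hq0.le hq1 (by omega)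
        intro h; rw [sub_eq_zero] at h; rw [← h] at this; exact lt_irrefl _ this
      rw [Finset.sum_range_succ, Finset.sum_range_succ, Finset.sum_range_succ,
        Finset.sum_range_one]
      norm_num [hA1, hA0, hA3, cCoeff1 q hq1]
      rw [show Psi q 1 x = 2*x from rfl]
      have h3' : (1-q^2) * (hq q 3 x)
          = (1-q^2) * (A 2 * (1/2 * (2*x)) + cCoeff q 3 * Psi q 3 x) := by
        linear_combination hb3 - x * hr0
      have := mul_left_cancel₀ hne h3'
      linarith [this]
    | (l+4), ih =>
      have ih2 : hq q (l+2) x = ∑ k ∈ Finset.range (l+3), A (l+2-k) * (cCoeff q k * Psi q k x) :=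
        ih (l+2) (by omega)
      have ih0 : hq q l x = ∑ k ∈ Finset.range (l+1), A (l-k) * (cCoeff q k * Psi q k x) :=
        ih l (by omega)
      have hMh := Mh q a x hq0 hq1 haq l
      have hKEY : q * (∑ k ∈ Finset.range (l+5), A (l+4-k) * (cCoeff q k * Psi q k x))
          + q^(2*l+8) * (∑ k ∈ Finset.range (l+5), A (l+4-k) * (cCoeff q k * Psi q k x))
          + a^2*q^(2*l+5) * (∑ k ∈ Finset.range (l+1), A (l-k) * (cCoeff q k * Psi q k x))
        = (1+q)*q^(l+4) * (∑ k ∈ Finset.range (l+5), A (l+4-k) * (cCoeff q k * Psi q k x))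
          + ((4*x^2-2)*a*q^(l+4) + a*(q^2+q^3)*q^(2*l+4))
              * (∑ k ∈ Finset.range (l+3), A (l+2-k) * (cCoeff q k * Psi q k x)) :=
        KEY q a x A _ hA1 hArec (fun j => LB q a x hq0 hq1 haq j) l
      show hq q (l+4) x = ∑ k ∈ Finset.range (l+5), A (l+4-k) * (cCoeff q k * Psi q k x)
      have hne3 : (0:ℝ) < 1 - q^(l+3) := by
        have : q^(l+3) < 1 := pow_lt_one₀ hq0.le hq1 (by omega)
        linarith
      have hne4 : (0:ℝ) < 1 - q^(l+4) := by
        have : q^(l+4) < 1 := pow_lt_one₀ hq0.le hq1 (by omega)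
        linarith
      have hfac : q*(1-q^(l+3))*(1-q^(l+4)) ≠ 0 := by positivity
      have hz : q*(1-q^(l+3))*(1-q^(l+4))
          * (hq q (l+4) x - ∑ k ∈ Finset.range (l+5), A (l+4-k) * (cCoeff q k * Psi q k x))
          = 0 := by
        linear_combination hMh - hKEY
          + (4*a*x^2*q^(l+4) - a*q^(l+4)*(2-q^(l+3)-q^(l+2))) * ih2
          - a^2*q^(2*l+5) * ih0
      rcases mul_eq_zero.mp hz with h | h
      · exact absurd h hfac
      · linarith [h]
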